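/- arXiv:2012.02476 — 4 statements merged into one kernel-verified Lean document; each statement's English description precedes it below -/
import Mathlib

section
/- Suppose S and A are finite nonempty types, γ ∈ [0,1) is a discount factor, R_max ≥ 0, and r : S → A → ℝ is a reward function with |r s a| ≤ R_max for all s, a. For a transition kernel P : S → A → PMF S and a policy π : S → PMF A, let P^π : S → PMF S be given by P^π(s) = (π s).bind (fun a => P s a); for an initial distribution μ : PMF S let μ_t^{π,P} be the t-fold bind iterate (μ_0 = μ, μ_{t+1} = μ_t.bind P^π); define the discounted value J(π,P) = ∑'_t γ^t ∑_s μ_t^{π,P}(s) ∑_a (π s)(a) · r s a and the discounted visitation distribution ρ^{π,P}(s) = (1−γ) ∑'_t γ^t μ_t^{π,P}(s). Let P_w (the true user model) and P_m (the learned meta-level user model) be two transition kernels, let π and π⋆ be policies, and let ε ≥ 0, ε_π ≥ 0 satisfy: (i) ∑_s ρ^{π,P_w}(s) ∑_a (π s)(a) · KL(P_w s a ‖ P_m s a) ≤ ε; (ii) ∑_s ρ^{π⋆,P_w}(s) ∑_a (π⋆ s)(a) · KL(P_w s a ‖ P_m s a) ≤ ε; (iii) J(π, P_m) ≥ J(π',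 P_m) − ε_π for every policy π' : S → PMF A. Then J(π⋆, P_w) − J(π, P_w) ≤ ε_π + 4·γ·R_max·√ε / (1−γ)². -/
open scoped ENNReal

/-- The `t`-fold bind iterate of an initial distribution `μ` under transition kernel `P`:
`μ_0 = μ`, `μ_{t+1} = μ_t.bind P`. -/
noncomputable def stepDist {S : Type*} (P : S → PMF S) (μ : PMF S) : ℕ → PMF S
  | 0 => μ
  | (t + 1) => (stepDist P μ t).bind P

/-- The state transition kernel `P^π(s) = (π s).bind (fun a => P s a)` induced by a
policy `π` in the environment model `P`. -/
noncomputable def polKernel {S A : Type*} (π : S → PMF A) (P : S → A → PMF S) :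
    S → PMF S :=
  fun s => (π s).bind (fun a => P s a)

/-- Discounted value of policy `π` in model `P`:
`J(π, P) = ∑'_t γ^t ∑_s μ_t^{π,P}(s) ∑_a (π s)(a) · r s a`. -/
noncomputable def polValue {S A : Type*} [Fintype S] [Fintype A] (γ : ℝ) (r : S → A → ℝ)
    (μ : PMF S) (π : S → PMF A) (P : S → A → PMF S) : ℝ :=
  ∑' t : ℕ, γ ^ t * ∑ s, (stepDist (polKernel π P) μ t s).toReal *
    ∑ a, (π s a).toReal * r s a

/-- Discounted state visitation distribution of policy `π` in model `P`:
`ρ^{π,P}(s) = (1−γ) ∑'_t γ^t μ_t^{π,P}(s)`. -/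
noncomputable def polVisitDist {S A : Type*} (γ : ℝ) (μ : PMF S) (π : S → PMF A)
    (P : S → A → PMF S) (s : S) : ℝ :=
  (1 - γ) * ∑' t : ℕ, γ ^ t * (stepDist (polKernel π P) μ t s).toReal

/-- Kullback–Leibler divergence `KL(p‖q) = ∑_s p s · log(p s / q s)` on a finite type,
with the conventions `0·log(0/q) = 0` and `KL(p‖q) = ∞` if `p` is not absolutely
continuous with respect to `q`. -/
noncomputable def klDivPMF {S : Type*} [Fintype S] (p q : PMF S) : ℝ≥0∞ :=
  if ∀ s, q s = 0 → p s = 0 then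
    ENNReal.ofReal (∑ s, (p s).toReal * Real.log ((p s).toReal / (q s).toReal))
  else ⊤



open scoped ENNReal
open Finset

namespace MetaRLAux

set_option linter.unusedSectionVars false

variable {S : Type*} [Fintype S]

noncomputable def pr (p : PMF S) (s : S) : ℝ := (p s).toReal

lemma pr_nonneg (p : PMF S) (s : S) : 0 ≤ pr p s := ENNReal.toReal_nonneg

lemma pr_ne_top (p : PMF S) (s : S) : p s ≠ ⊤ := p.apply_ne_top s

lemma ofReal_pr (p : PMF S) (s : S) : ENNReal.ofReal (pr p s) = p s :=
  ENNReal.ofReal_toReal (pr_ne_top p s)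

lemma sum_pr (p : PMF S) : ∑ s, pr p s = 1 := by
  have h := p.tsum_coe
  rw [tsum_fintype] at h
  have := ENNReal.toReal_sum (s := Finset.univ) (f := fun s => p s)
    (fun a _ => pr_ne_top p a)
  rw [h] at this
  simpa [pr] using this.symm

lemma pr_le_one (p : PMF S) (s : S) : pr p s ≤ 1 := by
  rw [← sum_pr p]
  exact Finset.single_le_sum (fun i _ => pr_nonneg p i) (mem_univ s)

lemma pr_eq_zero {p : PMF S} {s : S} : pr p s = 0 ↔ p s = 0 := by
  constructor
  · intro h
    have := ofReal_pr p s
    rw [h] at this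
    simpa using this.symm
  · intro h; simp [pr, h]

/-- real KL sum -/
noncomputable def klReal (p q : PMF S) : ℝ :=
  ∑ s, (p s).toReal * Real.log ((p s).toReal / (q s).toReal)

/-- pointwise inequality: `2p − 2√(pq) ≤ p log(p/q)` -/
lemma term_ineq {p q : ℝ} (hp : 0 ≤ p) (hq : 0 ≤ q) (h : q = 0 → p = 0) :
    2 * p - 2 * Real.sqrt (p * q) ≤ p * Real.log (p / q) := by
  rcases eq_or_lt_of_le hp with hp0 | hp0
  · simp [← hp0]
  rcases eq_or_lt_of_le hq with hq0 | hq0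
  · exact absurd (h hq0.symm) (ne_of_gt hp0)
  have hqp : 0 < q / p := div_pos hq0 hp0
  have hlog : Real.log (q / p) ≤ 2 * (Real.sqrt (q / p) - 1) := by
    have hs : 0 < Real.sqrt (q / p) := Real.sqrt_pos.2 hqp
    have := Real.log_le_sub_one_of_pos hs
    have hls : Real.log (Real.sqrt (q / p)) = Real.log (q / p) / 2 :=
      Real.log_sqrt hqp.le
    nlinarith [this]
  have hkey : -(2 * (Real.sqrt (q / p) - 1)) ≤ Real.log (p / q) := by
    have : Real.log (p / q) = - Real.log (q / p) := by
      rw [← Real.log_inv]; congr 1; field_simp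
    rw [this]; linarith
  have hsqrt : p * Real.sqrt (q / p) = Real.sqrt (p * q) := by
    have h1 : Real.sqrt (p * q) = Real.sqrt (p ^ 2 * (q / p)) := by
      congr 1; field_simp
    rw [h1, Real.sqrt_mul (sq_nonneg p), Real.sqrt_sq hp]
  have := mul_le_mul_of_nonneg_left hkey hp
  calc 2 * p - 2 * Real.sqrt (p * q) = p * (-(2 * (Real.sqrt (q / p) - 1))) := by
        rw [← hsqrt]; ring
    _ ≤ p * Real.log (p / q) := this

end MetaRLAux

namespace MetaRLAux2
open MetaRLAux
set_option linter.unusedSectionVars false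
variable {S : Type*} [Fintype S]

lemma sum_sqrt_mul_le_one (p q : PMF S) :
    ∑ s, Real.sqrt (pr p s * pr q s) ≤ 1 := by
  have h := sum_sq_le_sum_mul_sum_of_sq_eq_mul (Finset.univ)
    (r := fun s => Real.sqrt (pr p s * pr q s)) (f := pr p) (g := pr q)
    (fun i _ => pr_nonneg p i) (fun i _ => pr_nonneg q i)
    (fun i _ => Real.sq_sqrt (mul_nonneg (pr_nonneg p i) (pr_nonneg q i)))
  rw [sum_pr, sum_pr] at h
  have hnn : 0 ≤ ∑ s, Real.sqrt (pr p s * pr q s) :=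
    Finset.sum_nonneg fun i _ => Real.sqrt_nonneg _
  nlinarith

lemma hellinger_le_klReal (p q : PMF S) (hac : ∀ s, q s = 0 → p s = 0) :
    2 - 2 * ∑ s, Real.sqrt (pr p s * pr q s) ≤ klReal p q := by
  have h : ∀ s : S, 2 * pr p s - 2 * Real.sqrt (pr p s * pr q s) ≤
      (p s).toReal * Real.log ((p s).toReal / (q s).toReal) := by
    intro s
    exact term_ineq (pr_nonneg p s) (pr_nonneg q s)
      (fun h0 => pr_eq_zero.2 (hac s (pr_eq_zero.1 h0)))
  have := Finset.sum_le_sum (fun s (_ : s ∈ Finset.univ) => h s)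
  calc 2 - 2 * ∑ s, Real.sqrt (pr p s * pr q s)
      = ∑ s : S, (2 * pr p s - 2 * Real.sqrt (pr p s * pr q s)) := by
        rw [Finset.sum_sub_distrib, ← Finset.mul_sum, ← Finset.mul_sum, sum_pr]
        norm_num
    _ ≤ klReal p q := this

lemma klReal_nonneg (p q : PMF S) (hac : ∀ s, q s = 0 → p s = 0) :
    0 ≤ klReal p q := by
  have h1 := hellinger_le_klReal p q hac
  have h2 := sum_sqrt_mul_le_one p q
  linarith

lemma pinsker_weak (p q : PMF S) (hac : ∀ s, q s = 0 → p s = 0) :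
    ∑ s, |pr p s - pr q s| ≤ 2 * Real.sqrt (klReal p q) := by
  set f : S → ℝ := fun s => (Real.sqrt (pr p s) - Real.sqrt (pr q s)) ^ 2 with hf
  set g : S → ℝ := fun s => (Real.sqrt (pr p s) + Real.sqrt (pr q s)) ^ 2 with hg
  have hsq : ∀ s : S, Real.sqrt (pr p s) * Real.sqrt (pr q s)
      = Real.sqrt (pr p s * pr q s) := fun s =>
    (Real.sqrt_mul (pr_nonneg p s) _).symm
  have hCS := sum_sq_le_sum_mul_sum_of_sq_eq_mul (Finset.univ)
    (r := fun s => |pr p s - pr q s|) (f := f) (g := g)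
    (fun i _ => sq_nonneg _) (fun i _ => sq_nonneg _) ?_
  · have hfsum : ∑ s, f s ≤ klReal p q := by
      have : ∑ s, f s = 2 - 2 * ∑ s, Real.sqrt (pr p s * pr q s) := by
        have : ∀ s : S, f s = pr p s + pr q s - 2 * Real.sqrt (pr p s * pr q s) := by
          intro s
          simp only [hf]
          rw [sub_sq, Real.sq_sqrt (pr_nonneg p s), Real.sq_sqrt (pr_nonneg q s), ← hsq s]
          ring
        rw [Finset.sum_congr rfl (fun s _ => this s)]
        rw [Finset.sum_sub_distrib, Finset.sum_add_distrib, sum_pr, sum_pr, ← Finset.mul_sum]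
        norm_num
      rw [this]
      exact hellinger_le_klReal p q hac
    have hgsum : ∑ s, g s ≤ 4 := by
      have : ∀ s : S, g s = pr p s + pr q s + 2 * Real.sqrt (pr p s * pr q s) := by
        intro s
        simp only [hg]
        rw [add_sq, Real.sq_sqrt (pr_nonneg p s), Real.sq_sqrt (pr_nonneg q s), ← hsq s]
        ring
      rw [Finset.sum_congr rfl (fun s _ => this s), Finset.sum_add_distrib,
        Finset.sum_add_distrib, sum_pr, sum_pr, ← Finset.mul_sum]
      have := sum_sqrt_mul_le_one p q
      linarith
    have hfnn : (0:ℝ) ≤ ∑ s, f s := Finset.sum_nonneg fun i _ => sq_nonneg _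
    have hkl := klReal_nonneg p q hac
    have h4 : (∑ s, |pr p s - pr q s|) ^ 2 ≤ klReal p q * 4 := by
      calc (∑ s, |pr p s - pr q s|) ^ 2 ≤ (∑ s, f s) * ∑ s, g s := hCS
        _ ≤ klReal p q * 4 := by
          apply mul_le_mul hfsum hgsum (Finset.sum_nonneg fun i _ => sq_nonneg _) hkl
    have hnn : 0 ≤ ∑ s, |pr p s - pr q s| := Finset.sum_nonneg fun i _ => abs_nonneg _
    have hs := Real.sq_sqrt hkl
    have hsn := Real.sqrt_nonneg (klReal p q)
    nlinarith
  · intro i _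
    have e1 := Real.sq_sqrt (pr_nonneg p i)
    have e2 := Real.sq_sqrt (pr_nonneg q i)
    have key : (Real.sqrt (pr p i) - Real.sqrt (pr q i)) *
        (Real.sqrt (pr p i) + Real.sqrt (pr q i)) = pr p i - pr q i := by
      linear_combination e1 - e2
    simp only [hf, hg]
    rw [sq_abs, ← mul_pow, key]

end MetaRLAux2
namespace MetaRLAux
set_option linter.unusedSectionVars false
variable {S : Type*} [Fintype S]

noncomputable def dd (K : S → PMF S) (μ : PMF S) (t : ℕ) (s : S) : ℝ :=
  pr (stepDist K μ t) s

lemma dd_nonneg (K : S → PMF S) (μ : PMF S) (t : ℕ) (s : S) : 0 ≤ dd K μ t s :=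
  pr_nonneg _ _

lemma sum_dd (K : S → PMF S) (μ : PMF S) (t : ℕ) : ∑ s, dd K μ t s = 1 :=
  sum_pr _

lemma dd_le_one (K : S → PMF S) (μ : PMF S) (t : ℕ) (s : S) : dd K μ t s ≤ 1 :=
  pr_le_one _ _

lemma dd_succ (K : S → PMF S) (μ : PMF S) (t : ℕ) (s : S) :
    dd K μ (t + 1) s = ∑ s', dd K μ t s' * pr (K s') s := by
  simp only [dd, pr, stepDist, PMF.bind_apply]
  rw [tsum_fintype, ENNReal.toReal_sum (fun a _ =>
    ENNReal.mul_ne_top (pr_ne_top _ _) (pr_ne_top _ _))]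
  exact Finset.sum_congr rfl fun a _ => ENNReal.toReal_mul

lemma ex_succ (K : S → PMF S) (μ : PMF S) (g : S → ℝ) (t : ℕ) :
    ∑ s, dd K μ (t + 1) s * g s = ∑ s, dd K μ t s * ∑ s', pr (K s) s' * g s' := by
  simp_rw [dd_succ, Finset.sum_mul, Finset.mul_sum]
  rw [Finset.sum_comm]
  exact Finset.sum_congr rfl fun s _ => Finset.sum_congr rfl fun s' _ => by ring

noncomputable def mg (M : S → S → ℝ) (g : S → ℝ) : ℕ → S → ℝ
  | 0 => g
  | (i + 1) => fun s => ∑ s', M s s' * mg M g i s'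

lemma mg_bound {M : S → S → ℝ} (hM0 : ∀ s s', 0 ≤ M s s')
    (hM1 : ∀ s, ∑ s', M s s' = 1) {g : S → ℝ} {C : ℝ} (hg : ∀ s, |g s| ≤ C) :
    ∀ i s, |mg M g i s| ≤ C := by
  intro i
  induction i with
  | zero => exact hg
  | succ i ih =>
    intro s
    calc |∑ s', M s s' * mg M g i s'| ≤ ∑ s', |M s s' * mg M g i s'| :=
          Finset.abs_sum_le_sum_abs _ _
      _ ≤ ∑ s', M s s' * C := by
          apply Finset.sum_le_sum
          intro s' _
          rw [abs_mul, abs_of_nonneg (hM0 s s')]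
          exact mul_le_mul_of_nonneg_left (ih s') (hM0 s s')
      _ = C := by rw [← Finset.sum_mul, hM1 s, one_mul]

lemma mg_shift (M : S → S → ℝ) (g : S → ℝ) :
    ∀ i, mg M (fun s => ∑ s', M s s' * g s') i = mg M g (i + 1) := by
  intro i
  induction i with
  | zero => rfl
  | succ i ih =>
    funext s
    simp only [mg, ih]

lemma telescope (K M : S → PMF S) (μ : PMF S) :
    ∀ (t : ℕ) (g : S → ℝ),
    (∑ s, dd K μ t s * g s) - (∑ s, dd M μ t s * g s) =
    ∑ j ∈ Finset.range t, ∑ s, dd K μ j s *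
      (∑ s', (pr (K s) s' - pr (M s) s') *
        mg (fun u v => pr (M u) v) g (t - 1 - j) s') := by
  intro t
  induction t with
  | zero => intro g; simp [dd, stepDist]
  | succ t ih =>
    intro g
    set mm : S → S → ℝ := fun u v => pr (M u) v with hmm
    have hK := ex_succ K μ g t
    have hM := ex_succ M μ g t
    rw [hK, hM]
    have e : ∑ s, dd K μ t s * ∑ s', (pr (K s) s' - pr (M s) s') * g s'
        = (∑ s, dd K μ t s * ∑ s', pr (K s) s' * g s')
          - (∑ s, dd K μ t s * ∑ s', mm s s' * g s') := by
      rw [← Finset.sum_sub_distrib]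
      refine Finset.sum_congr rfl fun s _ => ?_
      rw [← mul_sub]
      congr 1
      rw [← Finset.sum_sub_distrib]
      exact Finset.sum_congr rfl fun s' _ => by simp only [hmm]; ring
    have ih' := ih (fun s => ∑ s', mm s s' * g s')
    have ih'' : (∑ s, dd K μ t s * ∑ s', mm s s' * g s')
        - (∑ s, dd M μ t s * ∑ s', mm s s' * g s')
        = ∑ j ∈ Finset.range t, ∑ s, dd K μ j s *
            (∑ s', (pr (K s) s' - pr (M s) s') * mg mm g (t - j) s') := by
      rw [ih']
      refine Finset.sum_congr rfl fun j hj => ?_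
      refine Finset.sum_congr rfl fun s _ => ?_
      congr 1
      refine Finset.sum_congr rfl fun s' _ => ?_
      have h1 : mg mm (fun s => ∑ s', mm s s' * g s') (t - 1 - j)
          = mg mm g (t - 1 - j + 1) := mg_shift mm g _
      rw [h1]
      have hj' := Finset.mem_range.1 hj
      have h2 : t - 1 - j + 1 = t - j := by omega
      rw [h2]
    rw [Finset.sum_range_succ]
    have hidx : ∀ j, t + 1 - 1 - j = t - j := by intro j; omega
    simp only [hidx]
    have hlast : t - t = 0 := by omega
    rw [hlast]
    have hmg0 : mg mm g 0 = g := rfl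
    rw [hmg0]
    linarith [e, ih'']

end MetaRLAux
namespace MetaRLAux
open MetaRLAux2
set_option linter.unusedSectionVars false
variable {S A : Type*} [Fintype S] [Fintype A]

lemma klDiv_props {p q : PMF S} (h : klDivPMF p q ≠ ⊤) :
    (∀ s, q s = 0 → p s = 0) ∧ (klDivPMF p q).toReal = klReal p q := by
  by_cases hac : ∀ s, q s = 0 → p s = 0
  · refine ⟨hac, ?_⟩
    rw [klDivPMF, if_pos hac]
    exact ENNReal.toReal_ofReal (klReal_nonneg p q hac)
  · exact absurd (by rw [klDivPMF, if_neg hac]) h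

lemma model_extract (ρ : S → ℝ) (hρ : ∀ s, 0 ≤ ρ s) (σ : S → PMF A)
    (Pw Pm : S → A → PMF S) (ε : ℝ) (hε : 0 ≤ ε)
    (hModel : ∑ s, ENNReal.ofReal (ρ s) *
      ∑ a, (σ s a) * klDivPMF (Pw s a) (Pm s a) ≤ ENNReal.ofReal ε) :
    (∑ s, ρ s * ∑ a, pr (σ s) a * (klDivPMF (Pw s a) (Pm s a)).toReal ≤ ε) ∧
    (∀ s a, ρ s ≠ 0 → pr (σ s) a ≠ 0 →
      (∑ s', |pr (Pw s a) s' - pr (Pm s a) s'|) ≤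
        2 * Real.sqrt ((klDivPMF (Pw s a) (Pm s a)).toReal)) := by
  have htop : ∑ s, ENNReal.ofReal (ρ s) *
      ∑ a, (σ s a) * klDivPMF (Pw s a) (Pm s a) < ⊤ :=
    lt_of_le_of_lt hModel ENNReal.ofReal_lt_top
  have hfin : ∀ s a, ρ s ≠ 0 → σ s a ≠ 0 → klDivPMF (Pw s a) (Pm s a) ≠ ⊤ := by
    intro s a hs ha htop'
    have h1 : ENNReal.ofReal (ρ s) * ∑ a, (σ s a) * klDivPMF (Pw s a) (Pm s a) < ⊤ := by
      refine lt_of_le_of_lt ?_ htop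
      exact Finset.single_le_sum (f := fun s => ENNReal.ofReal (ρ s) *
        ∑ a, (σ s a) * klDivPMF (Pw s a) (Pm s a)) (fun i _ => zero_le) (Finset.mem_univ s)
    have hρs : ENNReal.ofReal (ρ s) ≠ 0 := by
      simp only [ne_eq, ENNReal.ofReal_eq_zero, not_le]
      exact lt_of_le_of_ne (hρ s) (Ne.symm hs)
    have h2 : ∑ a, (σ s a) * klDivPMF (Pw s a) (Pm s a) < ⊤ := by
      by_contra hc
      rw [not_lt, top_le_iff] at hc
      rw [hc, ENNReal.mul_top hρs] at h1
      exact absurd h1 (lt_irrefl _)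
    have h3 : (σ s a) * klDivPMF (Pw s a) (Pm s a) < ⊤ := by
      refine lt_of_le_of_lt ?_ h2
      exact Finset.single_le_sum (f := fun a => (σ s a) * klDivPMF (Pw s a) (Pm s a))
        (fun i _ => zero_le) (Finset.mem_univ a)
    rw [htop', ENNReal.mul_top ha] at h3
    exact absurd h3 (lt_irrefl _)
  constructor
  · -- real sum bound
    have key : ENNReal.ofReal (∑ s, ρ s *
        ∑ a, pr (σ s) a * (klDivPMF (Pw s a) (Pm s a)).toReal) ≤ ENNReal.ofReal ε := by
      refine le_trans ?_ hModel
      rw [ENNReal.ofReal_sum_of_nonneg (fun s _ => mul_nonneg (hρ s)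
        (Finset.sum_nonneg fun a _ => mul_nonneg (pr_nonneg _ _) ENNReal.toReal_nonneg))]
      refine Finset.sum_le_sum fun s _ => ?_
      by_cases hs : ρ s = 0
      · simp [hs]
      · rw [ENNReal.ofReal_mul (hρ s)]
        refine mul_le_mul_right ?_ _
        rw [ENNReal.ofReal_sum_of_nonneg (fun a _ => mul_nonneg (pr_nonneg _ _)
          ENNReal.toReal_nonneg)]
        refine Finset.sum_le_sum fun a _ => ?_
        by_cases ha : σ s a = 0
        · simp [pr_eq_zero.2 ha]
        · rw [ENNReal.ofReal_mul (pr_nonneg _ _), ofReal_pr,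
            ENNReal.ofReal_toReal (hfin s a hs ha)]
    exact (ENNReal.ofReal_le_ofReal_iff hε).1 key
  · intro s a hs ha
    have hfin' := hfin s a hs (fun h0 => ha (pr_eq_zero.2 h0))
    obtain ⟨hac, heq⟩ := klDiv_props hfin'
    rw [heq]
    exact pinsker_weak _ _ hac

end MetaRLAux
namespace MetaRLAux
open MetaRLAux2
set_option linter.unusedSectionVars false
set_option maxHeartbeats 1000000
variable {S A : Type*} [Fintype S] [Fintype A]

lemma pr_polKernel (σ : S → PMF A) (P : S → A → PMF S) (s s' : S) :
    pr (polKernel σ P s) s' = ∑ a, pr (σ s) a * pr (P s a) s' := by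
  simp only [pr, polKernel, PMF.bind_apply]
  rw [tsum_fintype, ENNReal.toReal_sum (fun a _ =>
    ENNReal.mul_ne_top (pr_ne_top _ _) (pr_ne_top _ _))]
  exact Finset.sum_congr rfl fun a _ => ENNReal.toReal_mul

lemma abs_ex_le {K : S → PMF S} {μ : PMF S} {g : S → ℝ} {C : ℝ}
    (hg : ∀ s, |g s| ≤ C) (t : ℕ) : |∑ s, dd K μ t s * g s| ≤ C := by
  calc |∑ s, dd K μ t s * g s| ≤ ∑ s, |dd K μ t s * g s| := Finset.abs_sum_le_sum_abs _ _
    _ ≤ ∑ s, dd K μ t s * C := by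
        refine Finset.sum_le_sum fun s _ => ?_
        rw [abs_mul, abs_of_nonneg (dd_nonneg K μ t s)]
        exact mul_le_mul_of_nonneg_left (hg s) (dd_nonneg K μ t s)
    _ = C := by rw [← Finset.sum_mul, sum_dd, one_mul]

lemma sim (γ : ℝ) (hγ0 : 0 ≤ γ) (hγ1 : γ < 1) (Rmax : ℝ) (hR : 0 ≤ Rmax)
    (r : S → A → ℝ) (hr : ∀ s a, |r s a| ≤ Rmax)
    (μ : PMF S) (σ : S → PMF A) (Pw Pm : S → A → PMF S)
    (ε : ℝ) (hε : 0 ≤ ε)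
    (hModel : ∑ s, ENNReal.ofReal (polVisitDist γ μ σ Pw s) *
        ∑ a, (σ s a) * klDivPMF (Pw s a) (Pm s a) ≤ ENNReal.ofReal ε) :
    |polValue γ r μ σ Pw - polValue γ r μ σ Pm| ≤
      2 * γ * Rmax * Real.sqrt ε / (1 - γ) ^ 2 := by
  have h1γ : 0 < 1 - γ := by linarith
  set K : S → PMF S := polKernel σ Pw with hK
  set M : S → PMF S := polKernel σ Pm with hM
  set mm : S → S → ℝ := fun u v => pr (M u) v with hmm
  set g : S → ℝ := fun s => ∑ a, pr (σ s) a * r s a with hg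
  set ρ : S → ℝ := fun s => polVisitDist γ μ σ Pw s with hρ
  set tv : S → A → ℝ := fun s a => ∑ s', |pr (Pw s a) s' - pr (Pm s a) s'| with htv
  set Bf : S → A → ℝ := fun s a => (klDivPMF (Pw s a) (Pm s a)).toReal with hBf
  set β : S → ℝ := fun s => Rmax * ∑ a, pr (σ s) a * tv s a with hβ
  set Cβ : ℕ → ℝ := fun j => ∑ s, dd K μ j s * β s with hCβ
  set Bmax : ℝ := ∑ s, β s with hBmax
  set q : ℕ → ℝ := fun j => γ ^ j * Cβ j with hq
  set e : ℕ → ℝ := fun i => γ ^ (i + 1) with he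
  -- basic bounds
  have hgb : ∀ s, |g s| ≤ Rmax := by
    intro s
    calc |∑ a, pr (σ s) a * r s a| ≤ ∑ a, |pr (σ s) a * r s a| :=
          Finset.abs_sum_le_sum_abs _ _
      _ ≤ ∑ a, pr (σ s) a * Rmax := by
          refine Finset.sum_le_sum fun a _ => ?_
          rw [abs_mul, abs_of_nonneg (pr_nonneg _ _)]
          exact mul_le_mul_of_nonneg_left (hr s a) (pr_nonneg _ _)
      _ = Rmax := by rw [← Finset.sum_mul, sum_pr, one_mul]
  have hmgb : ∀ i s, |mg mm g i s| ≤ Rmax :=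
    mg_bound (fun s s' => pr_nonneg _ _) (fun s => sum_pr _) hgb
  have htvnn : ∀ s a, 0 ≤ tv s a :=
    fun s a => Finset.sum_nonneg fun s' _ => abs_nonneg _
  have hβnn : ∀ s, 0 ≤ β s := fun s =>
    mul_nonneg hR (Finset.sum_nonneg fun a _ => mul_nonneg (pr_nonneg _ _) (htvnn s a))
  have hCβnn : ∀ j, 0 ≤ Cβ j := fun j =>
    Finset.sum_nonneg fun s _ => mul_nonneg (dd_nonneg _ _ _ _) (hβnn s)
  have hCβle : ∀ j, Cβ j ≤ Bmax := by
    intro j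
    refine Finset.sum_le_sum fun s _ => ?_
    calc dd K μ j s * β s ≤ 1 * β s :=
          mul_le_mul_of_nonneg_right (dd_le_one _ _ _ _) (hβnn s)
      _ = β s := one_mul _
  have hBmaxnn : 0 ≤ Bmax := Finset.sum_nonneg fun s _ => hβnn s
  -- summability
  have hgeo : Summable (fun t : ℕ => γ ^ t) := summable_geometric_of_lt_one hγ0 hγ1
  have hpow : Summable (fun t : ℕ => (t : ℝ) * γ ^ t) := by
    have := summable_pow_mul_geometric_of_norm_lt_one (R := ℝ) 1
      (by rwa [Real.norm_eq_abs, abs_of_nonneg hγ0])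
    simpa using this
  have hdds : ∀ s, Summable (fun t => γ ^ t * dd K μ t s) := by
    intro s
    refine Summable.of_nonneg_of_le
      (fun t => mul_nonneg (pow_nonneg hγ0 t) (dd_nonneg _ _ _ _))
      (fun t => ?_) hgeo
    calc γ ^ t * dd K μ t s ≤ γ ^ t * 1 :=
          mul_le_mul_of_nonneg_left (dd_le_one _ _ _ _) (pow_nonneg hγ0 t)
      _ = γ ^ t := mul_one _
  have hsumK : Summable (fun t => γ ^ t * ∑ s, dd K μ t s * g s) := by
    refine Summable.of_norm_bounded (hgeo.mul_left Rmax) fun t => ?_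
    rw [Real.norm_eq_abs, abs_mul, abs_of_nonneg (pow_nonneg hγ0 t)]
    calc γ ^ t * |∑ s, dd K μ t s * g s| ≤ γ ^ t * Rmax :=
          mul_le_mul_of_nonneg_left (abs_ex_le hgb t) (pow_nonneg hγ0 t)
      _ = Rmax * γ ^ t := mul_comm _ _
  have hsumM : Summable (fun t => γ ^ t * ∑ s, dd M μ t s * g s) := by
    refine Summable.of_norm_bounded (hgeo.mul_left Rmax) fun t => ?_
    rw [Real.norm_eq_abs, abs_mul, abs_of_nonneg (pow_nonneg hγ0 t)]
    calc γ ^ t * |∑ s, dd M μ t s * g s| ≤ γ ^ t * Rmax :=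
          mul_le_mul_of_nonneg_left (abs_ex_le hgb t) (pow_nonneg hγ0 t)
      _ = Rmax * γ ^ t := mul_comm _ _
  -- value difference as a single tsum
  have hVK : polValue γ r μ σ Pw = ∑' t, γ ^ t * ∑ s, dd K μ t s * g s := rfl
  have hVM : polValue γ r μ σ Pm = ∑' t, γ ^ t * ∑ s, dd M μ t s * g s := rfl
  set f : ℕ → ℝ := fun t =>
    γ ^ t * ((∑ s, dd K μ t s * g s) - (∑ s, dd M μ t s * g s)) with hf
  have hdiff : polValue γ r μ σ Pw - polValue γ r μ σ Pm = ∑' t, f t := by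
    rw [hVK, hVM, ← Summable.tsum_sub hsumK hsumM]
    exact tsum_congr fun t => by rw [hf]; ring
  -- pointwise bound on the inner "advantage" term
  have hw : ∀ i s, |∑ s', (pr (K s) s' - pr (M s) s') * mg mm g i s'| ≤ β s := by
    intro i s
    have hsplit : ∑ s', (pr (K s) s' - pr (M s) s') * mg mm g i s'
        = ∑ a, pr (σ s) a *
          ∑ s', (pr (Pw s a) s' - pr (Pm s a) s') * mg mm g i s' := by
      simp only [hK, hM, pr_polKernel]
      have hx : ∀ x : S, (∑ a, pr (σ s) a * pr (Pw s a) x - ∑ a, pr (σ s) a * pr (Pm s a) x)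
          * mg mm g i x = ∑ a, pr (σ s) a * ((pr (Pw s a) x - pr (Pm s a) x) * mg mm g i x) := by
        intro x
        rw [← Finset.sum_sub_distrib, Finset.sum_mul]
        exact Finset.sum_congr rfl fun a _ => by ring
      rw [Finset.sum_congr rfl fun x _ => hx x, Finset.sum_comm]
      exact Finset.sum_congr rfl fun a _ => by rw [Finset.mul_sum]
    rw [hsplit, hβ]
    calc |∑ a, pr (σ s) a * ∑ s', (pr (Pw s a) s' - pr (Pm s a) s') * mg mm g i s'|
        ≤ ∑ a, |pr (σ s) a * ∑ s', (pr (Pw s a) s' - pr (Pm s a) s') * mg mm g i s'| :=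
          Finset.abs_sum_le_sum_abs _ _
      _ ≤ ∑ a, pr (σ s) a * (tv s a * Rmax) := by
          refine Finset.sum_le_sum fun a _ => ?_
          rw [abs_mul, abs_of_nonneg (pr_nonneg _ _)]
          refine mul_le_mul_of_nonneg_left ?_ (pr_nonneg _ _)
          calc |∑ s', (pr (Pw s a) s' - pr (Pm s a) s') * mg mm g i s'|
              ≤ ∑ s', |(pr (Pw s a) s' - pr (Pm s a) s') * mg mm g i s'| :=
                Finset.abs_sum_le_sum_abs _ _
            _ ≤ ∑ s', |pr (Pw s a) s' - pr (Pm s a) s'| * Rmax := by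
                refine Finset.sum_le_sum fun s' _ => ?_
                rw [abs_mul]
                exact mul_le_mul_of_nonneg_left (hmgb i s') (abs_nonneg _)
            _ = tv s a * Rmax := by rw [htv, Finset.sum_mul]
      _ = Rmax * ∑ a, pr (σ s) a * tv s a := by
          rw [Finset.mul_sum]
          exact Finset.sum_congr rfl fun a _ => by ring
  set h : ℕ → ℝ := fun t => γ ^ t * ∑ j ∈ Finset.range t, Cβ j with hh
  have hterm : ∀ t, |f t| ≤ h t := by
    intro t
    rw [hf, hh, abs_mul, abs_of_nonneg (pow_nonneg hγ0 t)]
    refine mul_le_mul_of_nonneg_left ?_ (pow_nonneg hγ0 t)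
    rw [telescope K M μ t g]
    calc |∑ j ∈ Finset.range t, ∑ s, dd K μ j s *
          (∑ s', (pr (K s) s' - pr (M s) s') * mg mm g (t - 1 - j) s')|
        ≤ ∑ j ∈ Finset.range t, |∑ s, dd K μ j s *
          (∑ s', (pr (K s) s' - pr (M s) s') * mg mm g (t - 1 - j) s')| :=
          Finset.abs_sum_le_sum_abs _ _
      _ ≤ ∑ j ∈ Finset.range t, Cβ j := by
          refine Finset.sum_le_sum fun j _ => ?_
          calc |∑ s, dd K μ j s *
                (∑ s', (pr (K s) s' - pr (M s) s') * mg mm g (t - 1 - j) s')|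
              ≤ ∑ s, |dd K μ j s *
                (∑ s', (pr (K s) s' - pr (M s) s') * mg mm g (t - 1 - j) s')| :=
                Finset.abs_sum_le_sum_abs _ _
            _ ≤ ∑ s, dd K μ j s * β s := by
                refine Finset.sum_le_sum fun s _ => ?_
                rw [abs_mul, abs_of_nonneg (dd_nonneg _ _ _ _)]
                exact mul_le_mul_of_nonneg_left (hw _ s) (dd_nonneg _ _ _ _)
            _ = Cβ j := rfl
  have hhnn : ∀ t, 0 ≤ h t := fun t =>
    mul_nonneg (pow_nonneg hγ0 t) (Finset.sum_nonneg fun j _ => hCβnn j)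
  have hsum_h : Summable h := by
    refine Summable.of_nonneg_of_le hhnn (fun t => ?_) (hpow.mul_left Bmax)
    rw [hh]
    calc γ ^ t * ∑ j ∈ Finset.range t, Cβ j ≤ γ ^ t * ((t : ℝ) * Bmax) := by
          refine mul_le_mul_of_nonneg_left ?_ (pow_nonneg hγ0 t)
          calc ∑ j ∈ Finset.range t, Cβ j ≤ ∑ _j ∈ Finset.range t, Bmax :=
                Finset.sum_le_sum fun j _ => hCβle j
            _ = (t : ℝ) * Bmax := by rw [Finset.sum_const, Finset.card_range, nsmul_eq_mul]
      _ = Bmax * ((t : ℝ) * γ ^ t) := by ring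
  have hsf : Summable f := by
    refine Summable.of_norm_bounded hsum_h fun t => ?_
    rw [Real.norm_eq_abs]; exact hterm t
  have habs : |polValue γ r μ σ Pw - polValue γ r μ σ Pm| ≤ ∑' t, h t := by
    rw [hdiff]
    calc |∑' t, f t| ≤ ∑' t, |f t| := by
          have := norm_tsum_le_tsum_norm (f := f) (by simpa [Real.norm_eq_abs] using hsf.abs)
          simpa [Real.norm_eq_abs] using this
      _ ≤ ∑' t, h t := Summable.tsum_le_tsum hterm hsf.abs hsum_h
  -- Cauchy product evaluation of ∑' h
  have hqnn : ∀ j, 0 ≤ q j := fun j => mul_nonneg (pow_nonneg hγ0 j) (hCβnn j)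
  have hq_sum : Summable q := by
    refine Summable.of_nonneg_of_le hqnn (fun j => ?_) (hgeo.mul_right Bmax)
    exact mul_le_mul_of_nonneg_left (hCβle j) (pow_nonneg hγ0 j)
  have he_sum : Summable e := by
    have : e = fun i => γ * γ ^ i := by
      funext i; simp only [he]; rw [pow_succ']
    rw [this]; exact hgeo.mul_left γ
  have henn : ∀ i, 0 ≤ e i := fun i => pow_nonneg hγ0 _
  have hprod : Summable (fun x : ℕ × ℕ => q x.1 * e x.2) :=
    hq_sum.mul_of_nonneg he_sum hqnn henn
  have hCauchy := Summable.tsum_mul_tsum_eq_tsum_sum_range hq_sum he_sum hprod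
  have hmatch : ∀ n, (∑ k ∈ Finset.range (n + 1), q k * e (n - k)) = h (n + 1) := by
    intro n
    simp only [hh, hq, he]
    rw [Finset.mul_sum]
    refine Finset.sum_congr rfl fun k hk => ?_
    have hk' := Finset.mem_range.1 hk
    rw [mul_comm (γ ^ k * Cβ k) _, ← mul_assoc, ← pow_add]
    congr 2
    omega
  have he_tsum : ∑' i, e i = γ * (1 - γ)⁻¹ := by
    have : ∑' i, e i = ∑' i, γ * γ ^ i :=
      tsum_congr fun i => by simp only [he]; rw [pow_succ']
    rw [this, tsum_mul_left, tsum_geometric_of_lt_one hγ0 hγ1]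
  have htsum_h : ∑' t, h t = (∑' j, q j) * (γ * (1 - γ)⁻¹) := by
    rw [Summable.tsum_eq_zero_add hsum_h]
    have h0 : h 0 = 0 := by simp [hh]
    rw [h0, zero_add]
    have : ∑' n, h (n + 1) = ∑' n, ∑ k ∈ Finset.range (n + 1), q k * e (n - k) :=
      tsum_congr fun n => (hmatch n).symm
    rw [this, ← hCauchy, he_tsum]
  -- evaluate ∑' q via the visitation distribution
  have hρeq : ∀ s, ∑' t, γ ^ t * dd K μ t s = ρ s / (1 - γ) := by
    intro s
    rw [hρ]
    show ∑' t, γ ^ t * dd K μ t s = ((1 - γ) * ∑' t, γ ^ t * dd K μ t s) / (1 - γ)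
    field_simp
  have hρnn : ∀ s, 0 ≤ ρ s := by
    intro s
    rw [hρ]
    exact mul_nonneg h1γ.le (tsum_nonneg fun t =>
      mul_nonneg (pow_nonneg hγ0 t) (dd_nonneg _ _ _ _))
  have hsum_ρ : ∑ s, ρ s = 1 := by
    have h1 : ∑ s, ∑' t, γ ^ t * dd K μ t s = ∑' t, ∑ s, γ ^ t * dd K μ t s :=
      (Summable.tsum_finsetSum (fun s _ => hdds s)).symm
    have h2 : ∑' t, ∑ s, γ ^ t * dd K μ t s = (1 - γ)⁻¹ := by
      have : ∀ t : ℕ, ∑ s, γ ^ t * dd K μ t s = γ ^ t := by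
        intro t
        rw [← Finset.mul_sum, sum_dd, mul_one]
      rw [tsum_congr this, tsum_geometric_of_lt_one hγ0 hγ1]
    calc ∑ s, ρ s = (1 - γ) * ∑ s, ∑' t, γ ^ t * dd K μ t s := by
          rw [Finset.mul_sum]; exact Finset.sum_congr rfl fun s _ => rfl
      _ = 1 := by rw [h1, h2, mul_inv_cancel₀ h1γ.ne']
  have hA : ∑' j, q j = (∑ s, ρ s * β s) / (1 - γ) := by
    have h1 : ∀ j, q j = ∑ s, γ ^ j * dd K μ j s * β s := by
      intro j
      simp only [hq, hCβ]
      rw [Finset.mul_sum]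
      exact Finset.sum_congr rfl fun s _ => by ring
    have h2 : ∑' j, ∑ s, γ ^ j * dd K μ j s * β s
        = ∑ s, ∑' j, γ ^ j * dd K μ j s * β s :=
      Summable.tsum_finsetSum (fun s _ => (hdds s).mul_right (β s))
    rw [tsum_congr h1, h2]
    rw [Finset.sum_div]
    refine Finset.sum_congr rfl fun s _ => ?_
    rw [tsum_mul_right, hρeq s]
    ring
  -- model error extraction and Cauchy–Schwarz
  obtain ⟨hB, hTV⟩ := model_extract ρ hρnn σ Pw Pm ε hε hModel
  have hCS : ∑ s, ρ s * ∑ a, pr (σ s) a * (2 * Real.sqrt (Bf s a)) ≤ 2 * Real.sqrt ε := by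
    have key : (∑ x : S × A, ρ x.1 * pr (σ x.1) x.2 * Real.sqrt (Bf x.1 x.2)) ≤
        Real.sqrt ε := by
      have hCS2 := sum_sq_le_sum_mul_sum_of_sq_eq_mul (Finset.univ (α := S × A))
        (r := fun x => ρ x.1 * pr (σ x.1) x.2 * Real.sqrt (Bf x.1 x.2))
        (f := fun x => ρ x.1 * pr (σ x.1) x.2)
        (g := fun x => ρ x.1 * pr (σ x.1) x.2 * Bf x.1 x.2)
        (fun x _ => mul_nonneg (hρnn x.1) (pr_nonneg _ _))
        (fun x _ => mul_nonneg (mul_nonneg (hρnn x.1) (pr_nonneg _ _)) ENNReal.toReal_nonneg)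
        (fun x _ => by
          rw [mul_pow, Real.sq_sqrt (ENNReal.toReal_nonneg)]
          ring)
      have hfsum : (∑ x : S × A, ρ x.1 * pr (σ x.1) x.2) = 1 := by
        rw [Fintype.sum_prod_type]
        calc ∑ s, ∑ a, ρ s * pr (σ s) a = ∑ s, ρ s * ∑ a, pr (σ s) a := by
              refine Finset.sum_congr rfl fun s _ => ?_
              rw [Finset.mul_sum]
          _ = 1 := by
              rw [Finset.sum_congr rfl fun s _ => by rw [sum_pr, mul_one]]
              exact hsum_ρ
      have hgsum : (∑ x : S × A, ρ x.1 * pr (σ x.1) x.2 * Bf x.1 x.2) ≤ ε := by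
        rw [Fintype.sum_prod_type]
        calc ∑ s, ∑ a, ρ s * pr (σ s) a * Bf s a
            = ∑ s, ρ s * ∑ a, pr (σ s) a * Bf s a := by
              refine Finset.sum_congr rfl fun s _ => ?_
              rw [Finset.mul_sum]
              exact Finset.sum_congr rfl fun a _ => by ring
          _ ≤ ε := hB
      rw [hfsum] at hCS2
      refine Real.le_sqrt_of_sq_le ?_
      calc (∑ x : S × A, ρ x.1 * pr (σ x.1) x.2 * Real.sqrt (Bf x.1 x.2)) ^ 2
          ≤ 1 * ∑ x : S × A, ρ x.1 * pr (σ x.1) x.2 * Bf x.1 x.2 := hCS2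
        _ ≤ ε := by rw [one_mul]; exact hgsum
    calc ∑ s, ρ s * ∑ a, pr (σ s) a * (2 * Real.sqrt (Bf s a))
        = 2 * ∑ x : S × A, ρ x.1 * pr (σ x.1) x.2 * Real.sqrt (Bf x.1 x.2) := by
          rw [Fintype.sum_prod_type, Finset.mul_sum]
          refine Finset.sum_congr rfl fun s _ => ?_
          rw [Finset.mul_sum, Finset.mul_sum]
          exact Finset.sum_congr rfl fun a _ => by ring
      _ ≤ 2 * Real.sqrt ε := by
          have := key
          linarith
  have hfinal1 : ∑ s, ρ s * β s ≤ Rmax * (2 * Real.sqrt ε) := by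
    have step1 : ∑ s, ρ s * β s
        = Rmax * ∑ s, ρ s * ∑ a, pr (σ s) a * tv s a := by
      rw [Finset.mul_sum]
      exact Finset.sum_congr rfl fun s _ => by rw [hβ]; ring
    have step2 : ∑ s, ρ s * ∑ a, pr (σ s) a * tv s a
        ≤ ∑ s, ρ s * ∑ a, pr (σ s) a * (2 * Real.sqrt (Bf s a)) := by
      refine Finset.sum_le_sum fun s _ => ?_
      by_cases hs : ρ s = 0
      · simp [hs]
      · refine mul_le_mul_of_nonneg_left ?_ (hρnn s)
        refine Finset.sum_le_sum fun a _ => ?_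
        by_cases ha : pr (σ s) a = 0
        · simp [ha]
        · exact mul_le_mul_of_nonneg_left (hTV s a hs ha) (pr_nonneg _ _)
    calc ∑ s, ρ s * β s = Rmax * ∑ s, ρ s * ∑ a, pr (σ s) a * tv s a := step1
      _ ≤ Rmax * ∑ s, ρ s * ∑ a, pr (σ s) a * (2 * Real.sqrt (Bf s a)) :=
          mul_le_mul_of_nonneg_left step2 hR
      _ ≤ Rmax * (2 * Real.sqrt ε) := mul_le_mul_of_nonneg_left hCS hR
  -- final assembly
  calc |polValue γ r μ σ Pw - polValue γ r μ σ Pm| ≤ ∑' t, h t := habs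
    _ = (∑ s, ρ s * β s) / (1 - γ) * (γ * (1 - γ)⁻¹) := by rw [htsum_h, hA]
    _ ≤ (Rmax * (2 * Real.sqrt ε)) / (1 - γ) * (γ * (1 - γ)⁻¹) := by
        have hpos : 0 ≤ γ * (1 - γ)⁻¹ := mul_nonneg hγ0 (inv_nonneg.2 h1γ.le)
        refine mul_le_mul_of_nonneg_right ?_ hpos
        gcongr
    _ = 2 * γ * Rmax * Real.sqrt ε / (1 - γ) ^ 2 := by
        field_simp

end MetaRLAux
/-- Theorem 1: recommendation performance bound of meta-level model-based RL.
If (i) the modeling error of the learned model `Pm` w.r.t. the true model `Pw` under the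
visitation distribution of `π` is at most `ε`, (ii) likewise under the visitation
distribution of `π⋆`, and (iii) `π` is `ε_π`-optimal in the learned model `Pm`, then
`J(π⋆, P_w) − J(π, P_w) ≤ ε_π + 4·γ·R_max·√ε / (1−γ)²`. -/
theorem meta_model_based_rl_performance_bound {S A : Type*}
    [Fintype S] [Nonempty S] [Fintype A] [Nonempty A]
    (γ : ℝ) (hγ0 : 0 ≤ γ) (hγ1 : γ < 1)
    (Rmax : ℝ) (hR : 0 ≤ Rmax) (r : S → A → ℝ) (hr : ∀ s a, |r s a| ≤ Rmax)
    (μ : PMF S) (Pw Pm : S → A → PMF S) (π πStar : S → PMF A)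
    (ε επ : ℝ) (hε : 0 ≤ ε) (hεπ : 0 ≤ επ)
    (hModelπ : ∑ s, ENNReal.ofReal (polVisitDist γ μ π Pw s) *
      ∑ a, (π s a) * klDivPMF (Pw s a) (Pm s a) ≤ ENNReal.ofReal ε)
    (hModelπStar : ∑ s, ENNReal.ofReal (polVisitDist γ μ πStar Pw s) *
      ∑ a, (πStar s a) * klDivPMF (Pw s a) (Pm s a) ≤ ENNReal.ofReal ε)
    (hOpt : ∀ π' : S → PMF A, polValue γ r μ π Pm ≥ polValue γ r μ π' Pm - επ) :
    polValue γ r μ πStar Pw - polValue γ r μ π Pw ≤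
      επ + 4 * γ * Rmax * Real.sqrt ε / (1 - γ) ^ 2 := by
  have h1 := MetaRLAux.sim γ hγ0 hγ1 Rmax hR r hr μ πStar Pw Pm ε hε hModelπStar
  have h2 := MetaRLAux.sim γ hγ0 hγ1 Rmax hR r hr μ π Pw Pm ε hε hModelπ
  have h3 := hOpt πStar
  have e1 := abs_le.1 h1
  have e2 := abs_le.1 h2
  have heq : 4 * γ * Rmax * Real.sqrt ε / (1 - γ) ^ 2
      = 2 * (2 * γ * Rmax * Real.sqrt ε / (1 - γ) ^ 2) := by ring
  linarith [e1.1, e1.2, e2.1, e2.2]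
end

section
/- Let S be a finite nonempty type, γ ∈ [0,1), R_max ≥ 0, r : S → ℝ with |r s| ≤ R_max for all s, μ : PMF S, and let P, P' : S → PMF S be two transition kernels. If TV(P s, P' s) ≤ α for every s ∈ S, then |J(μ, P) − J(μ, P')| ≤ 2·γ·R_max·α / (1−γ)². -/
open scoped ENNReal

/-- Discounted value `J(μ, P) = ∑'_t γ^t ∑_s μ_t^P(s) · r(s)`. -/
noncomputable def discValue {S : Type*} [Fintype S] (γ : ℝ) (r : S → ℝ)
    (μ : PMF S) (P : S → PMF S) : ℝ :=
  ∑' t : ℕ, γ ^ t * ∑ s, (stepDist P μ t s).toReal * r s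

/-- Total variation distance `TV(p, q) = (1/2) ∑_s |p s − q s|` on a finite type. -/
noncomputable def tvDist {S : Type*} [Fintype S] (p q : PMF S) : ℝ :=
  (1 / 2) * ∑ s, |(p s).toReal - (q s).toReal|

lemma sum_toReal_eq_one {S : Type*} [Fintype S] (p : PMF S) :
    ∑ s, (p s).toReal = 1 := by
  rw [← ENNReal.toReal_sum (fun a _ => PMF.apply_ne_top p a), ← tsum_fintype (L := .unconditional _),
    PMF.tsum_coe, ENNReal.toReal_one]

lemma bind_apply_toReal {S : Type*} [Fintype S] (p : PMF S) (P : S → PMF S) (s : S) :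
    ((p.bind P) s).toReal = ∑ a, (p a).toReal * (P a s).toReal := by
  rw [PMF.bind_apply, tsum_fintype, ENNReal.toReal_sum]
  · exact Finset.sum_congr rfl fun a _ => ENNReal.toReal_mul
  · exact fun a _ => ENNReal.mul_ne_top (PMF.apply_ne_top p a) (PMF.apply_ne_top (P a) s)

lemma tvDist_nonneg {S : Type*} [Fintype S] (p q : PMF S) : 0 ≤ tvDist p q := by
  unfold tvDist
  positivity

lemma tv_bind_le {S : Type*} [Fintype S] (p q : PMF S) (P P' : S → PMF S) (α : ℝ)
    (hTV : ∀ s, tvDist (P s) (P' s) ≤ α) :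
    tvDist (p.bind P) (q.bind P') ≤ tvDist p q + α := by
  have key : ∑ s, |((p.bind P) s).toReal - ((q.bind P') s).toReal|
      ≤ ∑ a, |(p a).toReal - (q a).toReal| + 2 * α := by
    have h1 : ∀ s, ((p.bind P) s).toReal - ((q.bind P') s).toReal
        = ∑ a, (((p a).toReal - (q a).toReal) * (P a s).toReal
          + (q a).toReal * ((P a s).toReal - (P' a s).toReal)) := by
      intro s
      rw [bind_apply_toReal, bind_apply_toReal, ← Finset.sum_sub_distrib]
      exact Finset.sum_congr rfl fun a _ => by ring
    calc ∑ s, |((p.bind P) s).toReal - ((q.bind P') s).toReal|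
        ≤ ∑ s, ∑ a, (|(p a).toReal - (q a).toReal| * (P a s).toReal
            + (q a).toReal * |(P a s).toReal - (P' a s).toReal|) := by
          refine Finset.sum_le_sum fun s _ => ?_
          rw [h1 s]
          refine (Finset.abs_sum_le_sum_abs _ _).trans (Finset.sum_le_sum fun a _ => ?_)
          refine (abs_add_le _ _).trans ?_
          rw [abs_mul, abs_mul, abs_of_nonneg (ENNReal.toReal_nonneg :
            (0:ℝ) ≤ ((P a) s).toReal), abs_of_nonneg (ENNReal.toReal_nonneg :
            (0:ℝ) ≤ ((q a)).toReal)]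
      _ = ∑ a, (|(p a).toReal - (q a).toReal| * (∑ s, (P a s).toReal)
            + (q a).toReal * ∑ s, |(P a s).toReal - (P' a s).toReal|) := by
          rw [Finset.sum_comm]
          refine Finset.sum_congr rfl fun a _ => ?_
          rw [Finset.sum_add_distrib, ← Finset.mul_sum, ← Finset.mul_sum]
      _ ≤ ∑ a, (|(p a).toReal - (q a).toReal| * 1 + (q a).toReal * (2 * α)) := by
          refine Finset.sum_le_sum fun a _ => ?_
          have h1 : ∑ s, ((P a) s).toReal ≤ 1 := le_of_eq (sum_toReal_eq_one (P a))
          have h2 : ∑ s, |((P a) s).toReal - ((P' a) s).toReal| ≤ 2 * α := by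
            have := hTV a
            unfold tvDist at this
            linarith
          exact add_le_add (mul_le_mul_of_nonneg_left h1 (abs_nonneg _))
            (mul_le_mul_of_nonneg_left h2 ENNReal.toReal_nonneg)
      _ = ∑ a, |(p a).toReal - (q a).toReal| + 2 * α := by
          rw [Finset.sum_add_distrib, ← Finset.sum_mul, ← Finset.sum_mul,
            sum_toReal_eq_one, mul_one, one_mul]
  unfold tvDist
  linarith

lemma tv_step {S : Type*} [Fintype S] (μ : PMF S) (P P' : S → PMF S) (α : ℝ)
    (hTV : ∀ s, tvDist (P s) (P' s) ≤ α) (t : ℕ) :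
    tvDist (stepDist P μ t) (stepDist P' μ t) ≤ t * α := by
  induction t with
  | zero => simp [tvDist, stepDist]
  | succ t ih =>
      have := tv_bind_le (stepDist P μ t) (stepDist P' μ t) P P' α hTV
      simp only [stepDist]
      push_cast
      linarith

lemma abs_sum_r_le {S : Type*} [Fintype S] (p q : PMF S) (Rmax : ℝ) (r : S → ℝ)
    (hr : ∀ s, |r s| ≤ Rmax) :
    |∑ s, (p s).toReal * r s - ∑ s, (q s).toReal * r s| ≤ 2 * Rmax * tvDist p q := by
  rw [← Finset.sum_sub_distrib]
  calc |∑ s, ((p s).toReal * r s - (q s).toReal * r s)|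
      ≤ ∑ s, |(p s).toReal - (q s).toReal| * Rmax := by
        refine (Finset.abs_sum_le_sum_abs _ _).trans (Finset.sum_le_sum fun s _ => ?_)
        rw [← sub_mul, abs_mul]
        exact mul_le_mul_of_nonneg_left (hr s) (abs_nonneg _)
    _ = 2 * Rmax * tvDist p q := by
        rw [← Finset.sum_mul]
        unfold tvDist
        ring

/-- Uniform simulation lemma: if the two kernels are `α`-close in total variation at every
state, then the discounted values differ by at most `2·γ·R_max·α / (1−γ)²`. -/
theorem uniform_simulation_lemma {S : Type*} [Fintype S] [Nonempty S]
    (γ : ℝ) (hγ0 : 0 ≤ γ) (hγ1 : γ < 1)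
    (Rmax : ℝ) (hR : 0 ≤ Rmax) (r : S → ℝ) (hr : ∀ s, |r s| ≤ Rmax)
    (μ : PMF S) (P P' : S → PMF S) (α : ℝ)
    (hTV : ∀ s, tvDist (P s) (P' s) ≤ α) :
    |discValue γ r μ P - discValue γ r μ P'| ≤ 2 * γ * Rmax * α / (1 - γ) ^ 2 := by
  have hγn : ‖γ‖ < 1 := by rwa [Real.norm_eq_abs, abs_of_nonneg hγ0]
  -- boundedness of each term
  have hA : ∀ (Q : S → PMF S) (t : ℕ),
      |γ ^ t * ∑ s, (stepDist Q μ t s).toReal * r s| ≤ Rmax * γ ^ t := by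
    intro Q t
    rw [abs_mul, abs_pow, abs_of_nonneg hγ0, mul_comm]
    gcongr
    calc |∑ s, (stepDist Q μ t s).toReal * r s|
        ≤ ∑ s, (stepDist Q μ t s).toReal * Rmax := by
          refine (Finset.abs_sum_le_sum_abs _ _).trans (Finset.sum_le_sum fun s _ => ?_)
          rw [abs_mul, abs_of_nonneg ENNReal.toReal_nonneg]
          exact mul_le_mul_of_nonneg_left (hr s) ENNReal.toReal_nonneg
      _ = Rmax := by rw [← Finset.sum_mul, sum_toReal_eq_one, one_mul]
  have hsumgeo : Summable fun t : ℕ => Rmax * γ ^ t :=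
    (summable_geometric_of_lt_one hγ0 hγ1).mul_left Rmax
  have hS : ∀ Q : S → PMF S,
      Summable fun t : ℕ => γ ^ t * ∑ s, (stepDist Q μ t s).toReal * r s := by
    intro Q
    exact Summable.of_abs (hsumgeo.of_nonneg_of_le (fun t => abs_nonneg _) (hA Q))
  -- the pointwise bound
  have hbound : ∀ t : ℕ,
      |γ ^ t * ∑ s, (stepDist P μ t s).toReal * r s
        - γ ^ t * ∑ s, (stepDist P' μ t s).toReal * r s|
      ≤ 2 * Rmax * α * (t * γ ^ t) := by
    intro t
    rw [← mul_sub, abs_mul, abs_pow, abs_of_nonneg hγ0]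
    calc γ ^ t * |∑ s, (stepDist P μ t s).toReal * r s
          - ∑ s, (stepDist P' μ t s).toReal * r s|
        ≤ γ ^ t * (2 * Rmax * (t * α)) := by
          refine mul_le_mul_of_nonneg_left ?_ (pow_nonneg hγ0 t)
          exact (abs_sum_r_le _ _ Rmax r hr).trans (by
            have := tv_step μ P P' α hTV t
            have h0 : (0:ℝ) ≤ 2 * Rmax := by positivity
            nlinarith)
      _ = 2 * Rmax * α * (t * γ ^ t) := by ring
  have hsumt : Summable fun t : ℕ => 2 * Rmax * α * ((t : ℝ) * γ ^ t) := by
    have := summable_pow_mul_geometric_of_norm_lt_one (R := ℝ) 1 hγn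
    simpa [pow_one] using this.mul_left (2 * Rmax * α)
  have hdiff : Summable fun t : ℕ =>
      γ ^ t * ∑ s, (stepDist P μ t s).toReal * r s
        - γ ^ t * ∑ s, (stepDist P' μ t s).toReal * r s := (hS P).sub (hS P')
  have habs : |discValue γ r μ P - discValue γ r μ P'|
      ≤ ∑' t : ℕ, 2 * Rmax * α * ((t : ℝ) * γ ^ t) := by
    unfold discValue
    rw [← Summable.tsum_sub (hS P) (hS P')]
    calc |∑' t : ℕ, (γ ^ t * ∑ s, (stepDist P μ t s).toReal * r s
            - γ ^ t * ∑ s, (stepDist P' μ t s).toReal * r s)|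
        ≤ ∑' t : ℕ, |γ ^ t * ∑ s, (stepDist P μ t s).toReal * r s
            - γ ^ t * ∑ s, (stepDist P' μ t s).toReal * r s| := by
          have hnorm : Summable fun t : ℕ => |γ ^ t * ∑ s, (stepDist P μ t s).toReal * r s
              - γ ^ t * ∑ s, (stepDist P' μ t s).toReal * r s| :=
            hsumt.of_nonneg_of_le (fun t => abs_nonneg _) hbound
          simpa [Real.norm_eq_abs] using norm_tsum_le_tsum_norm
            (f := fun t : ℕ => γ ^ t * ∑ s, (stepDist P μ t s).toReal * r s
              - γ ^ t * ∑ s, (stepDist P' μ t s).toReal * r s)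
            (by simpa [Real.norm_eq_abs] using hnorm)
      _ ≤ ∑' t : ℕ, 2 * Rmax * α * ((t : ℝ) * γ ^ t) := by
          refine Summable.tsum_le_tsum hbound ?_ hsumt
          exact (hsumt.of_nonneg_of_le (fun t => abs_nonneg _) hbound).congr (fun _ => rfl)
  have htsum : ∑' t : ℕ, 2 * Rmax * α * ((t : ℝ) * γ ^ t)
      = 2 * γ * Rmax * α / (1 - γ) ^ 2 := by
    rw [tsum_mul_left, tsum_coe_mul_geometric_of_norm_lt_one hγn]
    field_simp
  rw [htsum] at habs
  exact habs
end

section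
/- Let S be a finite nonempty type, γ ∈ [0,1), r : S → ℝ, μ : PMF S, and let P, P' : S → PMF S be two transition kernels. Let V'(s) denote the value of P' started from the point mass at s, i.e., V'(s) = J(δ_s, P'). Then J(μ, P) − J(μ, P') = (γ/(1−γ)) · ∑_s ρ_{μ,P}(s) · ( ∑_{s'} (P s)(s') · V'(s') − ∑_{s'} (P' s)(s') · V'(s') ). -/
open scoped ENNReal

/-- Discounted visitation distribution `ρ_{μ,P}(s) = (1−γ) ∑'_t γ^t μ_t^P(s)`. -/
noncomputable def visitDist {S : Type*} (γ : ℝ) (μ : PMF S) (P : S → PMF S) (s : S) : ℝ :=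
  (1 - γ) * ∑' t : ℕ, γ ^ t * (stepDist P μ t s).toReal

namespace TeleAux

set_option linter.unusedSectionVars false

variable {S : Type*} [Fintype S]

lemma toReal_bind (μ : PMF S) (P : S → PMF S) (s : S) :
    ((μ.bind P) s).toReal = ∑ a, (μ a).toReal * ((P a) s).toReal := by
  rw [PMF.bind_apply, tsum_fintype, ENNReal.toReal_sum]
  · simp [ENNReal.toReal_mul]
  · intro a _; exact ENNReal.mul_ne_top (PMF.apply_ne_top _ _) (PMF.apply_ne_top _ _)

lemma toReal_le_one (μ : PMF S) (s : S) : (μ s).toReal ≤ 1 := by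
  have := PMF.coe_le_one μ s
  simpa using ENNReal.toReal_mono (by norm_num) this

lemma toReal_nonneg' (μ : PMF S) (s : S) : 0 ≤ (μ s).toReal := ENNReal.toReal_nonneg

lemma stepDist_bind (P : S → PMF S) (μ : PMF S) :
    ∀ t, stepDist P μ (t + 1) = stepDist P (μ.bind P) t
  | 0 => rfl
  | (t + 1) => by
      show (stepDist P μ (t+1)).bind P = (stepDist P (μ.bind P) t).bind P
      rw [stepDist_bind P μ t]

lemma stepDist_pure (P : S → PMF S) (μ : PMF S) (t : ℕ) (s' : S) :
    (stepDist P μ t s').toReal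
      = ∑ s, (μ s).toReal * (stepDist P (PMF.pure s) t s').toReal := by
  induction t generalizing s' with
  | zero =>
      simp only [stepDist, PMF.pure_apply]
      rw [Finset.sum_eq_single s']
      · simp
      · intro b _ hb
        simp [Ne.symm hb]
      · simp
  | succ t ih =>
      show ((stepDist P μ t).bind P s').toReal = _
      rw [toReal_bind]
      have h : ∀ a, (stepDist P μ t a).toReal * (P a s').toReal
          = ∑ s, (μ s).toReal * ((stepDist P (PMF.pure s) t a).toReal * (P a s').toReal) := by
        intro a
        rw [ih a, Finset.sum_mul]
        simp [mul_assoc]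
      simp_rw [h]
      rw [Finset.sum_comm]
      refine Finset.sum_congr rfl fun s _ => ?_
      rw [← Finset.mul_sum]
      congr 1
      show _ = ((stepDist P (PMF.pure s) t).bind P s').toReal
      rw [toReal_bind]

section Gamma
variable {γ : ℝ} (hγ0 : 0 ≤ γ) (hγ1 : γ < 1) (r : S → ℝ)

lemma abs_R_le (μ : PMF S) : |∑ s, (μ s).toReal * r s| ≤ ∑ s, |r s| := by
  calc |∑ s, (μ s).toReal * r s| ≤ ∑ s, |(μ s).toReal * r s| :=
        Finset.abs_sum_le_sum_abs _ _
    _ ≤ ∑ s, |r s| := by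
        refine Finset.sum_le_sum fun s _ => ?_
        rw [abs_mul, abs_of_nonneg (toReal_nonneg' μ s)]
        exact mul_le_of_le_one_left (abs_nonneg _) (toReal_le_one μ s)

include hγ0 hγ1 in
lemma summable_geom_bdd {f : ℕ → ℝ} {C : ℝ} (h : ∀ t, |f t| ≤ C) :
    Summable (fun t => γ ^ t * f t) := by
  refine Summable.of_norm_bounded (g := fun t => γ ^ t * C)
    ((summable_geometric_of_lt_one hγ0 hγ1).mul_right C) fun t => ?_
  rw [Real.norm_eq_abs, abs_mul, abs_of_nonneg (pow_nonneg hγ0 t)]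
  exact mul_le_mul_of_nonneg_left (h t) (pow_nonneg hγ0 t)

include hγ0 hγ1 in
lemma summable_J (μ : PMF S) (P : S → PMF S) :
    Summable (fun t => γ ^ t * ∑ s, (stepDist P μ t s).toReal * r s) :=
  summable_geom_bdd hγ0 hγ1 fun t => abs_R_le r _

include hγ0 hγ1 in
lemma abs_discValue_le (μ : PMF S) (P : S → PMF S) :
    |discValue γ r μ P| ≤ (∑ s, |r s|) * (1 - γ)⁻¹ := by
  have hsum := summable_J hγ0 hγ1 r μ P
  have hg : Summable (fun t : ℕ => γ ^ t * ∑ s, |r s|) :=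
    (summable_geometric_of_lt_one hγ0 hγ1).mul_right _
  have h1 : ∀ t : ℕ, |γ ^ t * ∑ s, (stepDist P μ t s).toReal * r s|
      ≤ γ ^ t * ∑ s, |r s| := by
    intro t
    rw [abs_mul, abs_of_nonneg (pow_nonneg hγ0 t)]
    exact mul_le_mul_of_nonneg_left (abs_R_le r _) (pow_nonneg hγ0 t)
  have h2 : |discValue γ r μ P|
      ≤ ∑' t, |γ ^ t * ∑ s, (stepDist P μ t s).toReal * r s| := by
    simpa only [Real.norm_eq_abs, discValue] using
      norm_tsum_le_tsum_norm (f := fun t => γ ^ t * ∑ s, (stepDist P μ t s).toReal * r s)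
        (by simpa only [Real.norm_eq_abs] using hsum.abs)
  refine h2.trans ?_
  rw [show (∑ s, |r s|) * (1 - γ)⁻¹ = ∑' t : ℕ, γ ^ t * ∑ s, |r s| by
    rw [tsum_mul_right, tsum_geometric_of_lt_one hγ0 hγ1, mul_comm]]
  exact Summable.tsum_le_tsum h1 hsum.abs hg

include hγ0 hγ1 in
lemma bellman (μ : PMF S) (P : S → PMF S) :
    discValue γ r μ P = (∑ s, (μ s).toReal * r s) + γ * discValue γ r (μ.bind P) P := by
  unfold discValue
  rw [Summable.tsum_eq_zero_add (summable_J hγ0 hγ1 r μ P)]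
  have h2 : ∑' n : ℕ, γ ^ (n+1) * ∑ s, (stepDist P μ (n+1) s).toReal * r s
      = γ * ∑' t : ℕ, γ ^ t * ∑ s, (stepDist P (μ.bind P) t s).toReal * r s := by
    rw [← tsum_mul_left]
    exact tsum_congr fun t => by rw [stepDist_bind]; ring
  rw [h2]
  simp [stepDist]

include hγ0 hγ1 in
lemma discValue_affine (μ : PMF S) (P : S → PMF S) :
    discValue γ r μ P = ∑ s, (μ s).toReal * discValue γ r (PMF.pure s) P := by
  have key : ∀ t : ℕ, γ ^ t * ∑ s', (stepDist P μ t s').toReal * r s'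
      = ∑ s, (μ s).toReal *
          (γ ^ t * ∑ s', (stepDist P (PMF.pure s) t s').toReal * r s') := by
    intro t
    have : ∑ s', (stepDist P μ t s').toReal * r s'
        = ∑ s, (μ s).toReal * ∑ s', (stepDist P (PMF.pure s) t s').toReal * r s' := by
      simp_rw [stepDist_pure P μ t, Finset.sum_mul, mul_assoc]
      rw [Finset.sum_comm]
      simp [Finset.mul_sum]
    rw [this, Finset.mul_sum]
    refine Finset.sum_congr rfl fun s _ => by ring
  calc discValue γ r μ P
      = ∑' t : ℕ, ∑ s, (μ s).toReal *
          (γ ^ t * ∑ s', (stepDist P (PMF.pure s) t s').toReal * r s') := tsum_congr key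
    _ = ∑ s, ∑' t : ℕ, (μ s).toReal *
          (γ ^ t * ∑ s', (stepDist P (PMF.pure s) t s').toReal * r s') :=
        Summable.tsum_finsetSum fun s _ => (summable_J hγ0 hγ1 r (PMF.pure s) P).mul_left _
    _ = ∑ s, (μ s).toReal * discValue γ r (PMF.pure s) P := by
        refine Finset.sum_congr rfl fun s _ => ?_
        rw [tsum_mul_left]
        rfl

end Gamma

end TeleAux

open TeleAux Filter

namespace TeleAux
variable {S : Type*} [Fintype S]
section Gamma
variable {γ : ℝ} (hγ0 : 0 ≤ γ) (hγ1 : γ < 1) (r : S → ℝ)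

lemma tsum_telescope {a : ℕ → ℝ} (h : Summable a)
    (h0 : Tendsto a atTop (nhds 0)) : ∑' t, (a t - a (t+1)) = a 0 := by
  have hs : Summable (fun t => a (t+1)) := (summable_nat_add_iff 1).2 h
  have H : HasSum (fun t => a t - a (t+1)) (a 0) := by
    rw [(h.sub hs).hasSum_iff_tendsto_nat]
    have e : ∀ n, ∑ i ∈ Finset.range n, (a i - a (i+1)) = a 0 - a n :=
      fun n => Finset.sum_range_sub' a n
    simp_rw [e]
    simpa using (tendsto_const_nhds.sub h0)
  exact H.tsum_eq

include hγ0 hγ1 in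
lemma affine_bind (ν : PMF S) (Q P' : S → PMF S) :
    discValue γ r (ν.bind Q) P'
      = ∑ s, (ν s).toReal * ∑ s', ((Q s) s').toReal * discValue γ r (PMF.pure s') P' := by
  rw [discValue_affine hγ0 hγ1 r (ν.bind Q) P']
  simp_rw [toReal_bind, Finset.sum_mul]
  rw [Finset.sum_comm]
  simp [Finset.mul_sum, mul_assoc]

end Gamma
end TeleAux

/-- Exact telescoping identity underlying the simulation lemma: with
`V'(s) = J(δ_s, P')`, we have
`J(μ, P) − J(μ, P') = (γ/(1−γ)) · ∑_s ρ_{μ,P}(s) · (∑_{s'} (P s)(s')·V'(s') − ∑_{s'} (P' s)(s')·V'(s'))`. -/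
theorem telescoping_identity {S : Type*} [Fintype S] [Nonempty S]
    (γ : ℝ) (hγ0 : 0 ≤ γ) (hγ1 : γ < 1)
    (r : S → ℝ) (μ : PMF S) (P P' : S → PMF S) :
    discValue γ r μ P - discValue γ r μ P' =
      (γ / (1 - γ)) * ∑ s, visitDist γ μ P s *
        ((∑ s', (P s s').toReal * discValue γ r (PMF.pure s') P') -
          (∑ s', (P' s s').toReal * discValue γ r (PMF.pure s') P')) := by
  classical
  have h1γ : (1 : ℝ) - γ ≠ 0 := by linarith
  set v : S → ℝ := fun s => discValue γ r (PMF.pure s) P' with hv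
  set D : S → ℝ := fun s =>
    (∑ s', (P s s').toReal * v s') - (∑ s', (P' s s').toReal * v s') with hD
  set C := (∑ s, |r s|) * (1 - γ)⁻¹ with hCdef
  have hC : ∀ ν : PMF S, |discValue γ r ν P'| ≤ C := fun ν =>
    abs_discValue_le hγ0 hγ1 r ν P'
  set a : ℕ → ℝ := fun t => γ ^ t * discValue γ r (stepDist P μ t) P' with ha
  have ha_sum : Summable a := summable_geom_bdd hγ0 hγ1 (fun t => hC _)
  have ha0 : Tendsto a atTop (nhds 0) := by
    refine squeeze_zero_norm (f := a) (a := fun t => γ ^ t * C) (fun t => ?_) ?_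
    · rw [Real.norm_eq_abs, abs_mul, abs_of_nonneg (pow_nonneg hγ0 t)]
      exact mul_le_mul_of_nonneg_left (hC _) (pow_nonneg hγ0 t)
    · simpa using (tendsto_pow_atTop_nhds_zero_of_lt_one hγ0 hγ1).mul_const C
  -- the per-step identity
  have key : ∀ t, a t - a (t+1) =
      γ ^ t * (∑ s, (stepDist P μ t s).toReal * r s)
        - γ * (γ ^ t * ∑ s, (stepDist P μ t s).toReal * D s) := by
    intro t
    have hb := bellman hγ0 hγ1 r (stepDist P μ t) P'
    have h1 := affine_bind hγ0 hγ1 r (stepDist P μ t) P P'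
    have h2 := affine_bind hγ0 hγ1 r (stepDist P μ t) P' P'
    have hstep : stepDist P μ (t+1) = (stepDist P μ t).bind P := rfl
    have hdiff : discValue γ r ((stepDist P μ t).bind P) P'
        - discValue γ r ((stepDist P μ t).bind P') P'
        = ∑ s, (stepDist P μ t s).toReal * D s := by
      rw [h1, h2, ← Finset.sum_sub_distrib]
      refine Finset.sum_congr rfl fun s _ => ?_
      simp only [hD, hv]
      ring
    simp only [ha, hstep]
    rw [hb]
    have : discValue γ r ((stepDist P μ t).bind P) P'
        = (∑ s, (stepDist P μ t s).toReal * D s)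
          + discValue γ r ((stepDist P μ t).bind P') P' := by
      rw [← hdiff]; ring
    rw [this]
    ring
  have hsum1 := summable_J hγ0 hγ1 r μ P
  have hDsum : Summable (fun t => γ ^ t * ∑ s, (stepDist P μ t s).toReal * D s) :=
    summable_geom_bdd hγ0 hγ1 (fun t => abs_R_le D _)
  have tel : ∑' t, (a t - a (t+1)) = a 0 := TeleAux.tsum_telescope ha_sum ha0
  have ha0eq : a 0 = discValue γ r μ P' := by simp [ha, stepDist]
  have split : ∑' t, (a t - a (t+1))
      = discValue γ r μ P - γ * ∑' t, γ ^ t * ∑ s, (stepDist P μ t s).toReal * D s := by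
    rw [tsum_congr key, Summable.tsum_sub hsum1 (hDsum.mul_left γ), tsum_mul_left]
    rfl
  have main : discValue γ r μ P - discValue γ r μ P'
      = γ * ∑' t, γ ^ t * ∑ s, (stepDist P μ t s).toReal * D s := by
    rw [← ha0eq, ← tel, split]; ring
  rw [main]
  -- now rewrite the RHS
  have swap : ∑' t, γ ^ t * ∑ s, (stepDist P μ t s).toReal * D s
      = ∑ s, (∑' t : ℕ, γ ^ t * (stepDist P μ t s).toReal) * D s := by
    have e : ∀ t : ℕ, γ ^ t * ∑ s, (stepDist P μ t s).toReal * D s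
        = ∑ s, (γ ^ t * (stepDist P μ t s).toReal) * D s := by
      intro t; rw [Finset.mul_sum]; exact Finset.sum_congr rfl fun s _ => by ring
    rw [tsum_congr e, Summable.tsum_finsetSum (fun s _ => ?_)]
    · exact Finset.sum_congr rfl fun s _ => tsum_mul_right
    · exact (summable_geom_bdd hγ0 hγ1 (C := 1)
        (fun t => by rw [abs_of_nonneg (toReal_nonneg' _ _)]; exact toReal_le_one _ _)).mul_right (D s)
  rw [swap]
  unfold visitDist
  rw [Finset.mul_sum, Finset.mul_sum]
  refine Finset.sum_congr rfl fun s _ => ?_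
  field_simp
  ring
end

section
/- Let S be a finite nonempty type and let p, q : PMF S be such that p(s) + q(s) > 0 for every s ∈ S. Define the optimal discriminator D⋆(s) = p(s) / (p(s) + q(s)). Then (with the convention 0·log 0 = 0): ∑_s p(s) · log(D⋆(s)) + ∑_s q(s) · log(1 − D⋆(s)) = 2·JS(p, q) − log 4, where JS(p, q) = (1/2)·KL(p ‖ m) + (1/2)·KL(q ‖ m) and m(s) = (p(s) + q(s))/2. -/
open scoped ENNReal

/-- Discrete Kullback–Leibler divergence between nonnegative functions on a finite type:
`∑_s f s · log(f s / g s)`, with the convention `0·log(0/g) = 0` (note `Real.log 0 = 0`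
in Lean, so the formula realizes this convention). -/
noncomputable def klReal {S : Type*} [Fintype S] (f g : S → ℝ) : ℝ :=
  ∑ s, f s * Real.log (f s / g s)

/-- Optimal-discriminator identity for the adversarial objective: with
`D⋆(s) = p(s)/(p(s)+q(s))` and the mixture `m(s) = (p(s)+q(s))/2`,
`∑_s p(s)·log(D⋆(s)) + ∑_s q(s)·log(1 − D⋆(s)) = 2·JS(p, q) − log 4`,
where `JS(p, q) = (1/2)·KL(p‖m) + (1/2)·KL(q‖m)`. -/
theorem optimal_discriminator_js_identity {S : Type*} [Fintype S] [Nonempty S]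
    (p q : PMF S) (hpos : ∀ s, 0 < (p s).toReal + (q s).toReal) :
    (∑ s, (p s).toReal * Real.log ((p s).toReal / ((p s).toReal + (q s).toReal))) +
      (∑ s, (q s).toReal *
        Real.log (1 - (p s).toReal / ((p s).toReal + (q s).toReal))) =
    2 * ((1 / 2) * klReal (fun s => (p s).toReal)
            (fun s => ((p s).toReal + (q s).toReal) / 2) +
         (1 / 2) * klReal (fun s => (q s).toReal)
            (fun s => ((p s).toReal + (q s).toReal) / 2)) -
      Real.log 4 := by
  have hsum : ∀ r : PMF S, ∑ s, (r s).toReal = 1 := by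
    intro r
    have h1 : ∑ s, r s = 1 := by
      rw [← tsum_fintype (L := .unconditional _)]; exact r.tsum_coe
    have := congrArg ENNReal.toReal h1
    rwa [ENNReal.toReal_sum (fun s _ => r.apply_ne_top s)] at this
  have key : ∀ (r : PMF S) (f : S → ℝ),
      (∀ s, (r s).toReal * Real.log (f s) =
        (r s).toReal * Real.log ((r s).toReal / (((p s).toReal + (q s).toReal) / 2))
        - (r s).toReal * Real.log 2) →
      ∑ s, (r s).toReal * Real.log (f s) =
        klReal (fun s => (r s).toReal) (fun s => ((p s).toReal + (q s).toReal) / 2)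
          - Real.log 2 := by
    intro r f h
    simp only [klReal]
    rw [Finset.sum_congr rfl (fun s _ => h s), Finset.sum_sub_distrib,
      ← Finset.sum_mul, hsum r, one_mul]
  have hp := key p (fun s => (p s).toReal / ((p s).toReal + (q s).toReal)) ?_
  have hq := key q (fun s => 1 - (p s).toReal / ((p s).toReal + (q s).toReal)) ?_
  · rw [hp, hq]
    have h4 : Real.log 4 = 2 * Real.log 2 := by
      rw [show (4 : ℝ) = 2 ^ 2 by norm_num, Real.log_pow]; push_cast; ring
    rw [h4]; ring
  · intro s
    have hden := hpos s
    have h1 : 1 - (p s).toReal / ((p s).toReal + (q s).toReal) =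
        (q s).toReal / ((p s).toReal + (q s).toReal) := by
      field_simp; ring
    rw [h1]
    rcases eq_or_lt_of_le (ENNReal.toReal_nonneg : 0 ≤ (q s).toReal) with h0 | h0
    · simp [← h0]
    · have : (q s).toReal / (((p s).toReal + (q s).toReal) / 2) =
          ((q s).toReal / ((p s).toReal + (q s).toReal)) * 2 := by
        field_simp
      rw [this, Real.log_mul (by positivity) two_ne_zero]
      ring
  · intro s
    rcases eq_or_lt_of_le (ENNReal.toReal_nonneg : 0 ≤ (p s).toReal) with h0 | h0
    · simp [← h0]
    · have hden := hpos s
      have : (p s).toReal / (((p s).toReal + (q s).toReal) / 2) =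
          ((p s).toReal / ((p s).toReal + (q s).toReal)) * 2 := by
        field_simp
      rw [this, Real.log_mul (by positivity) two_ne_zero]
      ring
end
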